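/- Let λ = (λ₁,λ₂,λ₃) ∈ ℂ³ with λ₁+λ₂+λ₃ = 0. There exist constants C > 0 and N > 0 (depending only on λ) such that for all y₁,y₂ > 0, |W_λ(y₁,y₂)| ≤ C·(y₁^{N}+y₁^{−N})·(y₂^{N}+y₂^{−N})·e^{−2π(y₁+y₂)}. -/

import Mathlib

open scoped Real
open MeasureTheory Set

noncomputable section

/-- The modified Bessel function of the second kind,
`K_ν(u) = ∫₀^∞ e^{-u cosh t} cosh(νt) dt`. -/
def Kbessel (ν : ℂ) (u : ℝ) : ℂ :=
  ∫ t in Set.Ioi (0:ℝ), Complex.exp (-(u : ℂ) * Real.cosh t) * Complex.cosh (ν * t)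

/-- The decaying `SL(3)` Whittaker function, via the Vinogradov–Takhtajan formula. -/
def W (l₁ l₂ l₃ : ℂ) (y₁ y₂ : ℝ) : ℂ :=
  4 * (y₁ : ℂ) ^ (1 - l₂ / 2) * (y₂ : ℂ) ^ (1 + l₂ / 2) *
    ∫ x in Set.Ioi (0:ℝ),
      Kbessel ((l₁ - l₃) / 2) (2 * π * y₁ * Real.sqrt (1 + x)) *
      Kbessel ((l₁ - l₃) / 2) (2 * π * y₂ * Real.sqrt (1 + x⁻¹)) *
      (x : ℂ) ^ (-(3 * l₂ / 4) - 1)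


lemma exp_neg_le_rpow {M A : ℝ} (hM : 0 < M) (hA : 0 < A) :
    Real.exp (-A) ≤ M ^ M * A ^ (-M) := by
  have h1 : A / M ≤ Real.exp (A / M) := by
    have := Real.add_one_le_exp (A / M); linarith
  have h2 : (A / M) ^ M ≤ (Real.exp (A / M)) ^ M :=
    Real.rpow_le_rpow (by positivity) h1 hM.le
  have h3 : (Real.exp (A / M)) ^ M = Real.exp A := by
    rw [← Real.exp_one_rpow (A / M), ← Real.rpow_mul (Real.exp_pos 1).le,
      div_mul_cancel₀ _ hM.ne', Real.exp_one_rpow]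
  have h4 : (A / M) ^ M = A ^ M / M ^ M := Real.div_rpow hA.le hM.le M
  have h5 : A ^ M / M ^ M ≤ Real.exp A := by rw [← h4, ← h3]; exact h2
  have pA : (0:ℝ) < A ^ M := Real.rpow_pos_of_pos hA M
  have pM : (0:ℝ) < M ^ M := Real.rpow_pos_of_pos hM M
  calc Real.exp (-A) = (Real.exp A)⁻¹ := Real.exp_neg A
    _ ≤ (A ^ M / M ^ M)⁻¹ := by
        apply inv_anti₀ (by positivity) h5
    _ = M ^ M * A ^ (-M) := by
        rw [Real.rpow_neg hA.le]; field_simp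
lemma abs_cosh_le (w : ℂ) : ‖Complex.cosh w‖ ≤ Real.exp (‖w‖) := by
  have h : Complex.cosh w = (Complex.exp w + Complex.exp (-w)) / 2 := rfl
  have hre : |w.re| ≤ ‖w‖ := Complex.abs_re_le_norm w
  have h1 : ‖Complex.exp w‖ ≤ Real.exp (‖w‖) := by
    rw [Complex.norm_exp]; exact Real.exp_le_exp.2 ((le_abs_self _).trans hre)
  have h2 : ‖Complex.exp (-w)‖ ≤ Real.exp (‖w‖) := by
    rw [Complex.norm_exp, Complex.neg_re]
    exact Real.exp_le_exp.2 ((neg_le_abs _).trans hre)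
  calc ‖Complex.cosh w‖
      ≤ (‖Complex.exp w‖ + ‖Complex.exp (-w)‖) / 2 := by
        have h2' : ‖(2:ℂ)‖ = 2 := by simp
        rw [h, norm_div, h2']
        have := norm_add_le (Complex.exp w) (Complex.exp (-w))
        linarith
    _ ≤ Real.exp (‖w‖) := by linarith

lemma rpow_le_sum {y α N : ℝ} (hy : 0 < y) (hα : |α| ≤ N) : y ^ α ≤ y ^ N + y ^ (-N) := by
  rcases le_or_gt 1 y with h | h
  · have h1 : y ^ α ≤ y ^ N := Real.rpow_le_rpow_of_exponent_le h (le_of_abs_le hα)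
    have h2 : (0:ℝ) < y ^ (-N) := Real.rpow_pos_of_pos hy _
    linarith
  · have h1 : y ^ α ≤ y ^ (-N) := by
      apply Real.rpow_le_rpow_of_exponent_ge hy h.le
      have := neg_abs_le α; linarith
    have h2 : (0:ℝ) < y ^ N := Real.rpow_pos_of_pos hy _
    linarith

lemma sqrt_one_add_sub {x : ℝ} (hx : 1 ≤ x) : Real.sqrt x / 4 ≤ Real.sqrt (1 + x) - 1 := by
  have hs := Real.sq_sqrt (by linarith : (0:ℝ) ≤ x)
  have ht := Real.sq_sqrt (by linarith : (0:ℝ) ≤ 1 + x)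
  have h1 : 1 ≤ Real.sqrt x := by
    nlinarith [Real.sqrt_nonneg x]
  have h2 : 0 ≤ Real.sqrt (1 + x) := Real.sqrt_nonneg _
  nlinarith [sq_nonneg (Real.sqrt (1 + x) - Real.sqrt x)]

lemma Kbessel_bound (ν : ℂ) : ∃ C M : ℝ, 0 < C ∧ 0 < M ∧ ∀ u : ℝ, 0 < u →
    ‖Kbessel ν u‖ ≤ C * (1 + u ^ (-M)) * Real.exp (-u) := by
  set r := ‖ν‖ with hr
  have hr0 : 0 ≤ r := norm_nonneg ν
  set M : ℝ := r + 1 with hMdef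
  have hM0 : 0 < M := by positivity
  have hC1 : (0:ℝ) < 4 ^ (r + 1) := Real.rpow_pos_of_pos (by norm_num) _
  have hC2 : (0:ℝ) < (4 * M) ^ M := Real.rpow_pos_of_pos (by positivity) _
  refine ⟨4 ^ (r + 1) + (4 * M) ^ M, M, by positivity, hM0, fun u hu => ?_⟩
  have huM : (0:ℝ) < u ^ (-M) := Real.rpow_pos_of_pos hu _
  set B : ℝ := 4 ^ (r + 1) + (4 * M) ^ M * u ^ (-M) with hBdef
  have key : ∀ t : ℝ, t ∈ Ioi (0:ℝ) →
      ‖Complex.exp (-(u:ℂ) * Real.cosh t) * Complex.cosh (ν * t)‖ ≤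
      (B * Real.exp (-u)) * Real.exp (-t) := by
    intro t ht
    have ht0 : (0:ℝ) < t := ht
    have h1 : ‖Complex.exp (-(u:ℂ) * Real.cosh t)‖ = Real.exp (-(u * Real.cosh t)) := by
      rw [Complex.norm_exp]
      congr 1
      simp [Complex.mul_re]
    have h2 : ‖Complex.cosh (ν * t)‖ ≤ Real.exp (r * t) := by
      refine (abs_cosh_le _).trans (Real.exp_le_exp.2 ?_)
      rw [norm_mul, Complex.norm_real, Real.norm_eq_abs, abs_of_pos ht0]
    have hnn : (0:ℝ) ≤ Real.exp (-(u * Real.cosh t)) := (Real.exp_pos _).le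
    have hstep : Real.exp (-(u * Real.cosh t)) * Real.exp (r * t) ≤
        (B * Real.exp (-u)) * Real.exp (-t) := by
      have hc1 : 1 ≤ Real.cosh t := Real.one_le_cosh t
      rcases le_or_gt t (Real.log 4) with hcase | hcase
      · -- small t
        have e1 : Real.exp (-(u * Real.cosh t)) ≤ Real.exp (-u) := by
          apply Real.exp_le_exp.2; nlinarith
        have e2 : Real.exp (r * t) * Real.exp t ≤ 4 ^ (r + 1) := by
          rw [← Real.exp_add, Real.rpow_def_of_pos (by norm_num : (0:ℝ) < 4)]
          apply Real.exp_le_exp.2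
          have : r * t + t = (r + 1) * t := by ring
          rw [this]
          calc (r + 1) * t ≤ (r + 1) * Real.log 4 := by
                apply mul_le_mul_of_nonneg_left hcase (by positivity)
            _ = Real.log 4 * (r + 1) := by ring
        have hB1 : 4 ^ (r + 1) ≤ B := by
          rw [hBdef]; nlinarith
        have het : (0:ℝ) < Real.exp t := Real.exp_pos t
        have hrt : (0:ℝ) < Real.exp (r * t) := Real.exp_pos _
        have he : Real.exp (-t) * Real.exp t = 1 := by
          rw [← Real.exp_add]; simp
        have e3 : Real.exp (r * t) ≤ 4 ^ (r + 1) * Real.exp (-t) := by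
          nlinarith [Real.exp_pos (-t)]
        calc Real.exp (-(u * Real.cosh t)) * Real.exp (r * t)
            ≤ Real.exp (-u) * (4 ^ (r + 1) * Real.exp (-t)) := by
              apply mul_le_mul e1 e3 hrt.le (Real.exp_pos _).le
          _ = 4 ^ (r + 1) * Real.exp (-u) * Real.exp (-t) := by ring
          _ ≤ (B * Real.exp (-u)) * Real.exp (-t) := by
              have := mul_le_mul_of_nonneg_right (mul_le_mul_of_nonneg_right hB1
                (Real.exp_pos (-u)).le) (Real.exp_pos (-t)).le
              linarith
      · -- large t
        have h4t : (4:ℝ) ≤ Real.exp t := by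
          rw [← Real.exp_log (by norm_num : (0:ℝ) < 4)]
          exact Real.exp_le_exp.2 hcase.le
        have hch : Real.exp t / 4 ≤ Real.cosh t - 1 := by
          rw [Real.cosh_eq]; nlinarith [Real.exp_pos (-t)]
        have hA : (0:ℝ) < u * (Real.cosh t - 1) := by nlinarith
        have h5 : Real.exp (-(u * (Real.cosh t - 1))) ≤
            M ^ M * (u * (Real.cosh t - 1)) ^ (-M) := exp_neg_le_rpow hM0 hA
        have h6 : (u * (Real.cosh t - 1)) ^ (-M) = u ^ (-M) * (Real.cosh t - 1) ^ (-M) :=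
          Real.mul_rpow hu.le (by nlinarith)
        have h7 : (Real.cosh t - 1) ^ (-M) ≤ (Real.exp t / 4) ^ (-M) :=
          Real.rpow_le_rpow_of_nonpos (by positivity) hch (by linarith)
        have h8 : (Real.exp t / 4) ^ (-M) = 4 ^ M * Real.exp (-(M * t)) := by
          rw [Real.div_rpow (Real.exp_pos t).le (by norm_num : (0:ℝ) ≤ 4),
            Real.rpow_def_of_pos (Real.exp_pos t), Real.log_exp]
          rw [Real.rpow_neg (by norm_num : (0:ℝ) ≤ 4)]
          rw [div_eq_mul_inv, inv_inv, show t * -M = -(M * t) by ring]; ring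
        have hsplit2 : Real.exp (-(u * Real.cosh t)) =
            Real.exp (-u) * Real.exp (-(u * (Real.cosh t - 1))) := by
          rw [← Real.exp_add]; congr 1; ring
        have h9 : Real.exp (-(u * (Real.cosh t - 1))) ≤
            M ^ M * (u ^ (-M) * (4 ^ M * Real.exp (-(M * t)))) := by
          calc Real.exp (-(u * (Real.cosh t - 1)))
              ≤ M ^ M * (u * (Real.cosh t - 1)) ^ (-M) := h5
            _ = M ^ M * (u ^ (-M) * (Real.cosh t - 1) ^ (-M)) := by rw [h6]
            _ ≤ M ^ M * (u ^ (-M) * (Real.exp t / 4) ^ (-M)) := by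
                have hMM : (0:ℝ) < M ^ M := Real.rpow_pos_of_pos hM0 M
                exact mul_le_mul_of_nonneg_left
                  (mul_le_mul_of_nonneg_left h7 huM.le) hMM.le
            _ = M ^ M * (u ^ (-M) * (4 ^ M * Real.exp (-(M * t)))) := by rw [h8]
        have hexp2 : Real.exp (-(M * t)) * Real.exp (r * t) = Real.exp (-t) := by
          rw [← Real.exp_add]; congr 1; rw [hMdef]; ring
        have h4M : (4 * M) ^ M = 4 ^ M * M ^ M := Real.mul_rpow (by norm_num) hM0.le
        calc Real.exp (-(u * Real.cosh t)) * Real.exp (r * t)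
            = Real.exp (-u) * (Real.exp (-(u * (Real.cosh t - 1))) * Real.exp (r * t)) := by
              rw [hsplit2]; ring
          _ ≤ Real.exp (-u) *
              ((M ^ M * (u ^ (-M) * (4 ^ M * Real.exp (-(M * t))))) * Real.exp (r * t)) := by
              exact mul_le_mul_of_nonneg_left
                (mul_le_mul_of_nonneg_right h9 (Real.exp_pos _).le) (Real.exp_pos _).le
          _ = ((4 * M) ^ M * u ^ (-M)) * Real.exp (-u) *
              (Real.exp (-(M * t)) * Real.exp (r * t)) := by rw [h4M]; ring
          _ = ((4 * M) ^ M * u ^ (-M)) * Real.exp (-u) * Real.exp (-t) := by rw [hexp2]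
          _ ≤ (B * Real.exp (-u)) * Real.exp (-t) := by
              have hle : (4 * M) ^ M * u ^ (-M) ≤ B := by rw [hBdef]; nlinarith
              have := mul_le_mul_of_nonneg_right (mul_le_mul_of_nonneg_right hle
                (Real.exp_pos (-u)).le) (Real.exp_pos (-t)).le
              linarith
    calc ‖Complex.exp (-(u:ℂ) * Real.cosh t) * Complex.cosh (ν * t)‖
        = ‖Complex.exp (-(u:ℂ) * Real.cosh t)‖ * ‖Complex.cosh (ν * t)‖ := norm_mul _ _
      _ ≤ Real.exp (-(u * Real.cosh t)) * Real.exp (r * t) := by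
          rw [h1]; exact mul_le_mul_of_nonneg_left h2 hnn
      _ ≤ (B * Real.exp (-u)) * Real.exp (-t) := hstep
  have hgint : IntegrableOn (fun t => (B * Real.exp (-u)) * Real.exp (-t)) (Ioi (0:ℝ)) := by
    have : IntegrableOn (fun t => Real.exp (-t)) (Ioi (0:ℝ)) := by
      simpa using exp_neg_integrableOn_Ioi 0 one_pos
    exact this.const_mul _
  calc ‖Kbessel ν u‖
      = ‖∫ t in Ioi (0:ℝ), Complex.exp (-(u:ℂ) * Real.cosh t) * Complex.cosh (ν * t)‖ := rfl
    _ ≤ ∫ t in Ioi (0:ℝ), ‖Complex.exp (-(u:ℂ) * Real.cosh t) * Complex.cosh (ν * t)‖ :=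
        norm_integral_le_integral_norm _
    _ ≤ ∫ t in Ioi (0:ℝ), (B * Real.exp (-u)) * Real.exp (-t) := by
        apply integral_mono_of_nonneg (ae_of_all _ fun t => norm_nonneg _) hgint
        exact (ae_restrict_iff' measurableSet_Ioi).2 (ae_of_all _ key)
    _ = (B * Real.exp (-u)) * ∫ t in Ioi (0:ℝ), Real.exp (-t) := integral_const_mul _ _
    _ = B * Real.exp (-u) := by rw [integral_exp_neg_Ioi_zero, mul_one]
    _ ≤ (4 ^ (r + 1) + (4 * M) ^ M) * (1 + u ^ (-M)) * Real.exp (-u) := by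
        have : B ≤ (4 ^ (r + 1) + (4 * M) ^ M) * (1 + u ^ (-M)) := by nlinarith
        nlinarith [Real.exp_pos (-u)]

lemma sqrt_inv_rpow_neg {x L : ℝ} (hx : 0 < x) : (Real.sqrt x⁻¹) ^ (-L) = x ^ (L / 2) := by
  rw [Real.sqrt_eq_rpow, ← Real.rpow_mul (by positivity), Real.inv_rpow hx.le,
    ← Real.rpow_neg hx.le]
  congr 1; ring

lemma sqrt_rpow_neg {x L : ℝ} (hx : 0 < x) : (Real.sqrt x) ^ (-L) = x ^ (-(L / 2)) := by
  rw [Real.sqrt_eq_rpow, ← Real.rpow_mul hx.le]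
  congr 1; ring

set_option maxHeartbeats 1000000 in
theorem statement6 (l₁ l₂ l₃ : ℂ) (hsum : l₁ + l₂ + l₃ = 0) :
    ∃ C : ℝ, 0 < C ∧ ∃ N : ℝ, 0 < N ∧ ∀ y₁ y₂ : ℝ, 0 < y₁ → 0 < y₂ →
      ‖W l₁ l₂ l₃ y₁ y₂‖ ≤
        C * (y₁ ^ N + y₁ ^ (-N)) * (y₂ ^ N + y₂ ^ (-N)) *
          Real.exp (-(2 * π) * (y₁ + y₂)) := by
  obtain ⟨C, M, hC, hM, hK⟩ := Kbessel_bound ((l₁ - l₃) / 2)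
  set e : ℝ := (-(3 * l₂ / 4) - 1).re with he
  set L : ℝ := 2 * |e| + 4 with hLdef
  have hL0 : (0:ℝ) < L := by positivity
  set p : ℝ := (1 - l₂ / 2).re with hp
  set q : ℝ := (1 + l₂ / 2).re with hq
  set cM : ℝ := (2 * π) ^ (-M) with hcM
  set cL : ℝ := (π / 2) ^ (-L) with hcL
  have hcM0 : (0:ℝ) < cM := Real.rpow_pos_of_pos (by positivity) _
  have hcL0 : (0:ℝ) < cL := Real.rpow_pos_of_pos (by positivity) _
  have hLL : (0:ℝ) < L ^ L := Real.rpow_pos_of_pos hL0 _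
  refine ⟨8 * C ^ 2 * L ^ L * cL * (1 + cM) ^ 2, by positivity,
    |p| + |q| + M + L + 1, by positivity, fun y₁ y₂ hy₁ hy₂ => ?_⟩
  set N : ℝ := |p| + |q| + M + L + 1 with hN
  set ν : ℂ := (l₁ - l₃) / 2 with hν
  set f : ℝ → ℂ := fun x =>
    Kbessel ν (2 * π * y₁ * Real.sqrt (1 + x)) *
    Kbessel ν (2 * π * y₂ * Real.sqrt (1 + x⁻¹)) * (x:ℂ) ^ (-(3 * l₂ / 4) - 1) with hf
  -- step 1 : unfold the prefactor
  have hWabs : ‖W l₁ l₂ l₃ y₁ y₂‖ =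
      4 * y₁ ^ p * y₂ ^ q * ‖∫ x in Ioi (0:ℝ), f x‖ := by
    unfold W
    simp only [norm_mul]
    rw [Complex.norm_cpow_eq_rpow_re_of_pos hy₁, Complex.norm_cpow_eq_rpow_re_of_pos hy₂,
      ← hp, ← hq, ← hν]
    simp only [hf]
    norm_num
  -- basic constants
  have h2py₁ : (0:ℝ) < 2 * π * y₁ := by positivity
  have h2py₂ : (0:ℝ) < 2 * π * y₂ := by positivity
  set E : ℝ := Real.exp (-(2 * π * y₁)) * Real.exp (-(2 * π * y₂)) with hE
  have hE0 : (0:ℝ) < E := by positivity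
  set D₁ : ℝ := C * (1 + (2 * π * y₁) ^ (-M)) with hD₁
  set D₂ : ℝ := C * (1 + (2 * π * y₂) ^ (-M)) with hD₂
  have hD₁0 : (0:ℝ) < D₁ := by
    have : (0:ℝ) < (2 * π * y₁) ^ (-M) := Real.rpow_pos_of_pos h2py₁ _
    positivity
  have hD₂0 : (0:ℝ) < D₂ := by
    have : (0:ℝ) < (2 * π * y₂) ^ (-M) := Real.rpow_pos_of_pos h2py₂ _
    positivity
  set Da : ℝ := D₁ * D₂ * E * (L ^ L * (((π / 2) * y₂) ^ (-L))) with hDa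
  set Db : ℝ := D₁ * D₂ * E * (L ^ L * (((π / 2) * y₁) ^ (-L))) with hDb
  have hDa0 : (0:ℝ) < Da := by
    have : (0:ℝ) < ((π / 2) * y₂) ^ (-L) := Real.rpow_pos_of_pos (by positivity) _
    positivity
  have hDb0 : (0:ℝ) < Db := by
    have : (0:ℝ) < ((π / 2) * y₁) ^ (-L) := Real.rpow_pos_of_pos (by positivity) _
    positivity
  set g : ℝ → ℝ := fun x =>
    if x ≤ 1 then Da * x ^ (e + L / 2) else Db * x ^ (e - L / 2) with hg
  -- the uniform Bessel bound
  have hKb : ∀ y : ℝ, 0 < y → ∀ u : ℝ, 2 * π * y ≤ u →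
      ‖Kbessel ν u‖ ≤ C * (1 + (2 * π * y) ^ (-M)) * Real.exp (-u) := by
    intro y hy u hu
    have hu0 : (0:ℝ) < u := lt_of_lt_of_le (by positivity) hu
    refine (hK u hu0).trans ?_
    have h1 : u ^ (-M) ≤ (2 * π * y) ^ (-M) :=
      Real.rpow_le_rpow_of_nonpos (by positivity) hu (by linarith)
    exact mul_le_mul_of_nonneg_right (by nlinarith) (Real.exp_pos _).le
  have hsq1 : ∀ x : ℝ, 0 < x → 1 ≤ Real.sqrt (1 + x) := fun x hx => by
    have h := Real.sqrt_le_sqrt (show (1:ℝ) ≤ 1 + x by linarith)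
    rwa [Real.sqrt_one] at h
  -- pointwise bound
  have hpt : ∀ x ∈ Ioi (0:ℝ), ‖f x‖ ≤ g x := by
    intro x hx
    have hx0 : (0:ℝ) < x := hx
    have hfx : ‖f x‖ = ‖Kbessel ν (2 * π * y₁ * Real.sqrt (1 + x))‖ *
        ‖Kbessel ν (2 * π * y₂ * Real.sqrt (1 + x⁻¹))‖ * x ^ e := by
      simp only [hf, norm_mul]
      rw [Complex.norm_cpow_eq_rpow_re_of_pos hx0]
    have hs₁ : 1 ≤ Real.sqrt (1 + x) := hsq1 x hx0
    have hs₂ : 1 ≤ Real.sqrt (1 + x⁻¹) := hsq1 x⁻¹ (by positivity)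
    have hu₁ : 2 * π * y₁ ≤ 2 * π * y₁ * Real.sqrt (1 + x) := by nlinarith
    have hu₂ : 2 * π * y₂ ≤ 2 * π * y₂ * Real.sqrt (1 + x⁻¹) := by nlinarith
    have hK₁ := hKb y₁ hy₁ _ hu₁
    have hK₂ := hKb y₂ hy₂ _ hu₂
    have hxe : (0:ℝ) ≤ x ^ e := (Real.rpow_pos_of_pos hx0 e).le
    rcases le_or_gt x 1 with hxle | hxgt
    · -- x ≤ 1 : decay from the second factor
      have hx1 : (1:ℝ) ≤ x⁻¹ := (one_le_inv_iff₀).2 ⟨hx0, hxle⟩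
      have hA0 : (0:ℝ) < (π / 2) * y₂ * Real.sqrt x⁻¹ := by
        have : (0:ℝ) < Real.sqrt x⁻¹ := Real.sqrt_pos.2 (by positivity)
        positivity
      have hge : (π / 2) * y₂ * Real.sqrt x⁻¹ ≤
          2 * π * y₂ * (Real.sqrt (1 + x⁻¹) - 1) := by
        have h := sqrt_one_add_sub hx1
        have := mul_le_mul_of_nonneg_left h (le_of_lt h2py₂)
        nlinarith
      have hexp₂ : Real.exp (-(2 * π * y₂ * Real.sqrt (1 + x⁻¹))) ≤
          Real.exp (-(2 * π * y₂)) * (L ^ L * (((π / 2) * y₂) ^ (-L) * x ^ (L / 2))) := by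
        rw [show -(2 * π * y₂ * Real.sqrt (1 + x⁻¹)) =
          -(2 * π * y₂) + -(2 * π * y₂ * (Real.sqrt (1 + x⁻¹) - 1)) by ring, Real.exp_add]
        apply mul_le_mul_of_nonneg_left _ (Real.exp_pos _).le
        calc Real.exp (-(2 * π * y₂ * (Real.sqrt (1 + x⁻¹) - 1)))
            ≤ Real.exp (-((π / 2) * y₂ * Real.sqrt x⁻¹)) := Real.exp_le_exp.2 (by linarith)
          _ ≤ L ^ L * ((π / 2) * y₂ * Real.sqrt x⁻¹) ^ (-L) := exp_neg_le_rpow hL0 hA0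
          _ = L ^ L * (((π / 2) * y₂) ^ (-L) * x ^ (L / 2)) := by
              rw [Real.mul_rpow (by positivity) (Real.sqrt_nonneg _),
                sqrt_inv_rpow_neg hx0]
      have hb₁ : ‖Kbessel ν (2 * π * y₁ * Real.sqrt (1 + x))‖ ≤
          D₁ * Real.exp (-(2 * π * y₁)) :=
        hK₁.trans (mul_le_mul_of_nonneg_left (Real.exp_le_exp.2 (by linarith)) hD₁0.le)
      have hb₂ : ‖Kbessel ν (2 * π * y₂ * Real.sqrt (1 + x⁻¹))‖ ≤
          D₂ * (Real.exp (-(2 * π * y₂)) *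
            (L ^ L * (((π / 2) * y₂) ^ (-L) * x ^ (L / 2)))) :=
        hK₂.trans (mul_le_mul_of_nonneg_left hexp₂ hD₂0.le)
      have habs2nn : (0:ℝ) ≤ ‖Kbessel ν (2 * π * y₂ * Real.sqrt (1 + x⁻¹))‖ :=
        norm_nonneg _
      rw [hfx, hg]
      simp only [if_pos hxle]
      calc ‖Kbessel ν (2 * π * y₁ * Real.sqrt (1 + x))‖ *
            ‖Kbessel ν (2 * π * y₂ * Real.sqrt (1 + x⁻¹))‖ * x ^ e
          ≤ (D₁ * Real.exp (-(2 * π * y₁))) * (D₂ * (Real.exp (-(2 * π * y₂)) *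
              (L ^ L * (((π / 2) * y₂) ^ (-L) * x ^ (L / 2))))) * x ^ e := by
            apply mul_le_mul_of_nonneg_right _ hxe
            exact mul_le_mul hb₁ hb₂ habs2nn (by positivity)
        _ = Da * x ^ (e + L / 2) := by
            rw [Real.rpow_add hx0, hDa, hE]; ring
    · -- 1 < x : decay from the first factor
      have hx1 : (1:ℝ) ≤ x := hxgt.le
      have hA0 : (0:ℝ) < (π / 2) * y₁ * Real.sqrt x := by
        have : (0:ℝ) < Real.sqrt x := Real.sqrt_pos.2 hx0
        positivity
      have hge : (π / 2) * y₁ * Real.sqrt x ≤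
          2 * π * y₁ * (Real.sqrt (1 + x) - 1) := by
        have h := sqrt_one_add_sub hx1
        have := mul_le_mul_of_nonneg_left h (le_of_lt h2py₁)
        nlinarith
      have hexp₁ : Real.exp (-(2 * π * y₁ * Real.sqrt (1 + x))) ≤
          Real.exp (-(2 * π * y₁)) * (L ^ L * (((π / 2) * y₁) ^ (-L) * x ^ (-(L / 2)))) := by
        rw [show -(2 * π * y₁ * Real.sqrt (1 + x)) =
          -(2 * π * y₁) + -(2 * π * y₁ * (Real.sqrt (1 + x) - 1)) by ring, Real.exp_add]
        apply mul_le_mul_of_nonneg_left _ (Real.exp_pos _).le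
        calc Real.exp (-(2 * π * y₁ * (Real.sqrt (1 + x) - 1)))
            ≤ Real.exp (-((π / 2) * y₁ * Real.sqrt x)) := Real.exp_le_exp.2 (by linarith)
          _ ≤ L ^ L * ((π / 2) * y₁ * Real.sqrt x) ^ (-L) := exp_neg_le_rpow hL0 hA0
          _ = L ^ L * (((π / 2) * y₁) ^ (-L) * x ^ (-(L / 2))) := by
              rw [Real.mul_rpow (by positivity) (Real.sqrt_nonneg _), sqrt_rpow_neg hx0]
      have hb₁ : ‖Kbessel ν (2 * π * y₁ * Real.sqrt (1 + x))‖ ≤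
          D₁ * (Real.exp (-(2 * π * y₁)) *
            (L ^ L * (((π / 2) * y₁) ^ (-L) * x ^ (-(L / 2))))) :=
        hK₁.trans (mul_le_mul_of_nonneg_left hexp₁ hD₁0.le)
      have hb₂ : ‖Kbessel ν (2 * π * y₂ * Real.sqrt (1 + x⁻¹))‖ ≤
          D₂ * Real.exp (-(2 * π * y₂)) :=
        hK₂.trans (mul_le_mul_of_nonneg_left (Real.exp_le_exp.2 (by linarith)) hD₂0.le)
      have habs2nn : (0:ℝ) ≤ ‖Kbessel ν (2 * π * y₂ * Real.sqrt (1 + x⁻¹))‖ :=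
        norm_nonneg _
      rw [hfx, hg]
      simp only [if_neg (not_le.2 hxgt)]
      calc ‖Kbessel ν (2 * π * y₁ * Real.sqrt (1 + x))‖ *
            ‖Kbessel ν (2 * π * y₂ * Real.sqrt (1 + x⁻¹))‖ * x ^ e
          ≤ (D₁ * (Real.exp (-(2 * π * y₁)) *
              (L ^ L * (((π / 2) * y₁) ^ (-L) * x ^ (-(L / 2)))))) *
            (D₂ * Real.exp (-(2 * π * y₂))) * x ^ e := by
            apply mul_le_mul_of_nonneg_right _ hxe
            exact mul_le_mul hb₁ hb₂ habs2nn (by positivity)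
        _ = Db * x ^ (e - L / 2) := by
            rw [show e - L / 2 = e + -(L / 2) by ring, Real.rpow_add hx0, hDb, hE]; ring
  -- integrability of g
  have heL1 : (-1:ℝ) < e + L / 2 := by
    have h1 := neg_abs_le e; rw [hLdef]; linarith
  have heL0 : (0:ℝ) ≤ e + L / 2 := by
    have h1 := neg_abs_le e; rw [hLdef]; linarith
  have heL2 : e - L / 2 < -1 := by
    have h1 := le_abs_self e; rw [hLdef]; linarith
  have hint1 : IntegrableOn g (Ioc (0:ℝ) 1) := by
    have hbase : IntegrableOn (fun x : ℝ => x ^ (e + L / 2)) (Ioc (0:ℝ) 1) := by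
      have h := intervalIntegral.intervalIntegrable_rpow' (a := (0:ℝ)) (b := 1) heL1
      rwa [intervalIntegrable_iff_integrableOn_Ioc_of_le (by norm_num)] at h
    exact IntegrableOn.congr_fun (hbase.const_mul Da)
      (fun x hx => by rw [hg]; simp only [if_pos hx.2]) measurableSet_Ioc
  have hint2 : IntegrableOn g (Ioi (1:ℝ)) := by
    have hbase := integrableOn_Ioi_rpow_of_lt heL2 one_pos
    exact IntegrableOn.congr_fun (hbase.const_mul Db)
      (fun x hx => by rw [hg]; simp only [if_neg (not_le.2 (mem_Ioi.1 hx))]) measurableSet_Ioi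
  have hunion : Ioc (0:ℝ) 1 ∪ Ioi (1:ℝ) = Ioi (0:ℝ) := Ioc_union_Ioi_eq_Ioi zero_le_one
  have hgint : IntegrableOn g (Ioi (0:ℝ)) := by rw [← hunion]; exact hint1.union hint2
  -- integral bounds
  have hI1 : ∫ x in Ioc (0:ℝ) 1, g x ≤ Da := by
    rw [setIntegral_congr_fun measurableSet_Ioc
      (fun x hx => by rw [hg]; simp only [if_pos hx.2] :
        EqOn g (fun x => Da * x ^ (e + L / 2)) (Ioc (0:ℝ) 1)), integral_const_mul]
    have hb : ∫ x in Ioc (0:ℝ) 1, x ^ (e + L / 2) ≤ 1 := by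
      have hle : ∀ x ∈ Ioc (0:ℝ) 1, x ^ (e + L / 2) ≤ 1 := fun x hx =>
        Real.rpow_le_one hx.1.le hx.2 heL0
      calc ∫ x in Ioc (0:ℝ) 1, x ^ (e + L / 2)
          ≤ ∫ _x in Ioc (0:ℝ) 1, (1:ℝ) := by
            apply integral_mono_of_nonneg
            · exact (ae_restrict_iff' measurableSet_Ioc).2
                (ae_of_all _ fun x hx => Real.rpow_nonneg hx.1.le _)
            · exact integrableOn_const measure_Ioc_lt_top.ne
            · exact (ae_restrict_iff' measurableSet_Ioc).2 (ae_of_all _ hle)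
        _ = 1 := by simp [Real.volume_Ioc]
    exact mul_le_of_le_one_right hDa0.le hb
  have hI2 : ∫ x in Ioi (1:ℝ), g x ≤ Db := by
    rw [setIntegral_congr_fun measurableSet_Ioi
      (fun x hx => by rw [hg]; simp only [if_neg (not_le.2 (mem_Ioi.1 hx))] :
        EqOn g (fun x => Db * x ^ (e - L / 2)) (Ioi (1:ℝ))), integral_const_mul]
    rw [integral_Ioi_rpow_of_lt heL2 one_pos, Real.one_rpow]
    have h1 : (1:ℝ) ≤ -(e - L / 2 + 1) := by
      have h2 := le_abs_self e; rw [hLdef]; linarith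
    have hd : (0:ℝ) < -(e - L / 2 + 1) := by linarith
    have hval : -1 / (e - L / 2 + 1) ≤ 1 := by
      have h3 : -1 / (e - L / 2 + 1) = 1 / (-(e - L / 2 + 1)) := by
        rw [div_eq_div_iff (show e - L / 2 + 1 < 0 by linarith).ne hd.ne']; ring
      rw [h3, div_le_one hd]; exact h1
    exact mul_le_of_le_one_right hDb0.le hval
  have hsplit : ∫ x in Ioi (0:ℝ), g x =
      (∫ x in Ioc (0:ℝ) 1, g x) + ∫ x in Ioi (1:ℝ), g x := by
    rw [← hunion]
    exact setIntegral_union Ioc_disjoint_Ioi_same measurableSet_Ioi hint1 hint2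
  have hIb : ‖∫ x in Ioi (0:ℝ), f x‖ ≤ Da + Db := by
    calc ‖∫ x in Ioi (0:ℝ), f x‖ ≤ ∫ x in Ioi (0:ℝ), ‖f x‖ :=
        norm_integral_le_integral_norm _
      _ ≤ ∫ x in Ioi (0:ℝ), g x :=
          integral_mono_of_nonneg (ae_of_all _ fun x => norm_nonneg _) hgint
            ((ae_restrict_iff' measurableSet_Ioi).2 (ae_of_all _ hpt))
      _ = (∫ x in Ioc (0:ℝ) 1, g x) + ∫ x in Ioi (1:ℝ), g x := hsplit
      _ ≤ Da + Db := add_le_add hI1 hI2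
  -- final assembly
  have hpN : |p| ≤ N := by rw [hN]; have := abs_nonneg q; linarith
  have hpMN : |p - M| ≤ N := by
    rw [hN, abs_le]; constructor
    · have := neg_abs_le p; have := abs_nonneg q; linarith
    · have := le_abs_self p; have := abs_nonneg q; linarith
  have hpLN : |p - L| ≤ N := by
    rw [hN, abs_le]; constructor
    · have := neg_abs_le p; have := abs_nonneg q; linarith
    · have := le_abs_self p; have := abs_nonneg q; linarith
  have hpMLN : |p - M - L| ≤ N := by
    rw [hN, abs_le]; constructor
    · have := neg_abs_le p; have := abs_nonneg q; linarith
    · have := le_abs_self p; have := abs_nonneg q; linarith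
  have hqN : |q| ≤ N := by rw [hN]; have := abs_nonneg p; linarith
  have hqMN : |q - M| ≤ N := by
    rw [hN, abs_le]; constructor
    · have := neg_abs_le q; have := abs_nonneg p; linarith
    · have := le_abs_self q; have := abs_nonneg p; linarith
  have hqLN : |q - L| ≤ N := by
    rw [hN, abs_le]; constructor
    · have := neg_abs_le q; have := abs_nonneg p; linarith
    · have := le_abs_self q; have := abs_nonneg p; linarith
  have hqMLN : |q - M - L| ≤ N := by
    rw [hN, abs_le]; constructor
    · have := neg_abs_le q; have := abs_nonneg p; linarith
    · have := le_abs_self q; have := abs_nonneg p; linarith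
  set S₁ : ℝ := y₁ ^ N + y₁ ^ (-N) with hS₁
  set S₂ : ℝ := y₂ ^ N + y₂ ^ (-N) with hS₂
  have hS₁0 : (0:ℝ) < S₁ := by
    have := Real.rpow_pos_of_pos hy₁ N; have := Real.rpow_pos_of_pos hy₁ (-N); positivity
  have hS₂0 : (0:ℝ) < S₂ := by
    have := Real.rpow_pos_of_pos hy₂ N; have := Real.rpow_pos_of_pos hy₂ (-N); positivity
  set A₁ : ℝ := y₁ ^ p * (1 + cM * y₁ ^ (-M)) with hA₁
  set A₂ : ℝ := y₂ ^ q * (1 + cM * y₂ ^ (-M)) with hA₂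
  have hA₁0 : (0:ℝ) ≤ A₁ := by
    have := Real.rpow_pos_of_pos hy₁ p; have := Real.rpow_pos_of_pos hy₁ (-M); positivity
  have hA₂0 : (0:ℝ) ≤ A₂ := by
    have := Real.rpow_pos_of_pos hy₂ q; have := Real.rpow_pos_of_pos hy₂ (-M); positivity
  clear_value cM cL S₁ S₂ A₁ A₂ Da Db D₁ D₂ E L N p q e g f ν
  have hmerge₁ : ∀ a b : ℝ, y₁ ^ a * y₁ ^ b = y₁ ^ (a + b) := fun a b =>
    (Real.rpow_add hy₁ a b).symm
  have hmerge₂ : ∀ a b : ℝ, y₂ ^ a * y₂ ^ b = y₂ ^ (a + b) := fun a b =>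
    (Real.rpow_add hy₂ a b).symm
  have b1 : y₁ ^ p ≤ S₁ := by rw [hS₁]; exact rpow_le_sum hy₁ hpN
  have b2 : y₁ ^ p * y₁ ^ (-M) ≤ S₁ := by
    rw [hmerge₁, show p + -M = p - M by ring]; rw [hS₁]; exact rpow_le_sum hy₁ hpMN
  have b3 : y₁ ^ p * y₁ ^ (-L) ≤ S₁ := by
    rw [hmerge₁, show p + -L = p - L by ring]; rw [hS₁]; exact rpow_le_sum hy₁ hpLN
  have b4 : y₁ ^ p * y₁ ^ (-M) * y₁ ^ (-L) ≤ S₁ := by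
    rw [hmerge₁, hmerge₁, show p + -M + -L = p - M - L by ring]
    rw [hS₁]; exact rpow_le_sum hy₁ hpMLN
  have c1 : y₂ ^ q ≤ S₂ := by rw [hS₂]; exact rpow_le_sum hy₂ hqN
  have c2 : y₂ ^ q * y₂ ^ (-M) ≤ S₂ := by
    rw [hmerge₂, show q + -M = q - M by ring]; rw [hS₂]; exact rpow_le_sum hy₂ hqMN
  have c3 : y₂ ^ q * y₂ ^ (-L) ≤ S₂ := by
    rw [hmerge₂, show q + -L = q - L by ring]; rw [hS₂]; exact rpow_le_sum hy₂ hqLN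
  have c4 : y₂ ^ q * y₂ ^ (-M) * y₂ ^ (-L) ≤ S₂ := by
    rw [hmerge₂, hmerge₂, show q + -M + -L = q - M - L by ring]
    rw [hS₂]; exact rpow_le_sum hy₂ hqMLN
  have hyL₁ : (0:ℝ) < y₁ ^ (-L) := Real.rpow_pos_of_pos hy₁ _
  have hyL₂ : (0:ℝ) < y₂ ^ (-L) := Real.rpow_pos_of_pos hy₂ _
  have hyM₁ : (0:ℝ) < y₁ ^ (-M) := Real.rpow_pos_of_pos hy₁ _
  have hyM₂ : (0:ℝ) < y₂ ^ (-M) := Real.rpow_pos_of_pos hy₂ _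
  have hyp₁ : (0:ℝ) < y₁ ^ p := Real.rpow_pos_of_pos hy₁ _
  have hyq₂ : (0:ℝ) < y₂ ^ q := Real.rpow_pos_of_pos hy₂ _
  have hT₁ : A₁ ≤ (1 + cM) * S₁ := by
    rw [hA₁]
    calc y₁ ^ p * (1 + cM * y₁ ^ (-M)) = y₁ ^ p + cM * (y₁ ^ p * y₁ ^ (-M)) := by ring
      _ ≤ S₁ + cM * S₁ := add_le_add b1 (mul_le_mul_of_nonneg_left b2 hcM0.le)
      _ = (1 + cM) * S₁ := by ring
  have hT₁' : A₁ * y₁ ^ (-L) ≤ (1 + cM) * S₁ := by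
    rw [hA₁]
    calc y₁ ^ p * (1 + cM * y₁ ^ (-M)) * y₁ ^ (-L)
        = y₁ ^ p * y₁ ^ (-L) + cM * (y₁ ^ p * y₁ ^ (-M) * y₁ ^ (-L)) := by ring
      _ ≤ S₁ + cM * S₁ := add_le_add b3 (mul_le_mul_of_nonneg_left b4 hcM0.le)
      _ = (1 + cM) * S₁ := by ring
  have hT₂ : A₂ ≤ (1 + cM) * S₂ := by
    rw [hA₂]
    calc y₂ ^ q * (1 + cM * y₂ ^ (-M)) = y₂ ^ q + cM * (y₂ ^ q * y₂ ^ (-M)) := by ring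
      _ ≤ S₂ + cM * S₂ := add_le_add c1 (mul_le_mul_of_nonneg_left c2 hcM0.le)
      _ = (1 + cM) * S₂ := by ring
  have hT₂' : A₂ * y₂ ^ (-L) ≤ (1 + cM) * S₂ := by
    rw [hA₂]
    calc y₂ ^ q * (1 + cM * y₂ ^ (-M)) * y₂ ^ (-L)
        = y₂ ^ q * y₂ ^ (-L) + cM * (y₂ ^ q * y₂ ^ (-M) * y₂ ^ (-L)) := by ring
      _ ≤ S₂ + cM * S₂ := add_le_add c3 (mul_le_mul_of_nonneg_left c4 hcM0.le)
      _ = (1 + cM) * S₂ := by ring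
  have hxp1 : (2 * π * y₁) ^ (-M) = cM * y₁ ^ (-M) := by
    rw [Real.mul_rpow (by positivity) hy₁.le, ← hcM]
  have hxp2 : (2 * π * y₂) ^ (-M) = cM * y₂ ^ (-M) := by
    rw [Real.mul_rpow (by positivity) hy₂.le, ← hcM]
  have hxpL1 : ((π / 2) * y₁) ^ (-L) = cL * y₁ ^ (-L) := by
    rw [Real.mul_rpow (by positivity) hy₁.le, ← hcL]
  have hxpL2 : ((π / 2) * y₂) ^ (-L) = cL * y₂ ^ (-L) := by
    rw [Real.mul_rpow (by positivity) hy₂.le, ← hcL]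
  have hP1 : A₁ * (A₂ * y₂ ^ (-L)) ≤ ((1 + cM) * S₁) * ((1 + cM) * S₂) :=
    mul_le_mul hT₁ hT₂' (by positivity) (by positivity)
  have hP2 : (A₁ * y₁ ^ (-L)) * A₂ ≤ ((1 + cM) * S₁) * ((1 + cM) * S₂) :=
    mul_le_mul hT₁' hT₂ hA₂0 (by positivity)
  have hEE : E = Real.exp (-(2 * π) * (y₁ + y₂)) := by
    rw [hE, ← Real.exp_add]; congr 1; ring
  rw [hWabs]
  calc 4 * y₁ ^ p * y₂ ^ q * ‖∫ x in Ioi (0:ℝ), f x‖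
      ≤ 4 * y₁ ^ p * y₂ ^ q * (Da + Db) :=
        mul_le_mul_of_nonneg_left hIb (by positivity)
    _ = (4 * C ^ 2 * L ^ L * cL * E) *
        (A₁ * (A₂ * y₂ ^ (-L)) + (A₁ * y₁ ^ (-L)) * A₂) := by
        rw [hDa, hDb, hD₁, hD₂, hxp1, hxp2, hxpL1, hxpL2, hA₁, hA₂]; ring
    _ ≤ (4 * C ^ 2 * L ^ L * cL * E) *
        (((1 + cM) * S₁) * ((1 + cM) * S₂) + ((1 + cM) * S₁) * ((1 + cM) * S₂)) :=
        mul_le_mul_of_nonneg_left (add_le_add hP1 hP2) (by positivity)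
    _ = 8 * C ^ 2 * L ^ L * cL * (1 + cM) ^ 2 * S₁ * S₂ *
        Real.exp (-(2 * π) * (y₁ + y₂)) := by rw [hEE]; ring
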